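/- Let k ≥ 1, θ ∈ (0,1), p > k, and suppose f : Ω̄ × R → (0,∞) satisfies ∫_z^0 f(x,τ) dτ ≤ ((1-θ)/(k+1)) |z| f(x,z) for all z < -m. Define f_m(x,z) = f(x,z) for z > -m and f_m(x,z) = m^{-p} f(x,-m) |z|^p for z ≤ -m. Then there exists θ' > 0 depending only on θ and p such that ∫_z^0 f_m(x,τ) dτ ≤ ((1-θ')/(k+1)) |z| f_m(x,z) for all z < -m. -/

import Mathlib

open MeasureTheory Set intervalIntegral

private lemma aux_alg {s t p1 k1 θ θ' : ℝ} (ht : 0 < t) (hts : t ≤ s)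
    (hp1 : 0 < p1) (hk1 : 0 < k1) (hθθ' : θ' ≤ θ)
    (hk1p1 : k1 ≤ (1 - θ') * p1) :
    (s - t) / p1 + (1 - θ) / k1 * t ≤ (1 - θ') / k1 * s := by
  have key : k1 * (s - t) + (1 - θ) * p1 * t ≤ (1 - θ') * p1 * s := by
    have hs : 0 ≤ s := le_trans ht.le hts
    rcases le_or_gt k1 ((1 - θ) * p1) with h | h
    · nlinarith [mul_le_mul_of_nonneg_right hts (by linarith : (0:ℝ) ≤ (1 - θ) * p1 - k1),
        mul_nonneg (mul_nonneg (by linarith : (0:ℝ) ≤ θ - θ') hp1.le) hs]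
    · nlinarith [mul_le_mul_of_nonneg_right hk1p1 hs,
        mul_pos ht (by linarith : (0:ℝ) < k1 - (1 - θ) * p1)]
  calc (s - t) / p1 + (1 - θ) / k1 * t
      = (k1 * (s - t) + (1 - θ) * p1 * t) / (p1 * k1) := by field_simp
    _ ≤ ((1 - θ') * p1 * s) / (p1 * k1) := by
        apply div_le_div_of_nonneg_right key (by positivity) |>.trans_eq rfl
    _ = (1 - θ') / k1 * s := by field_simp

/-- The power-truncation `f_m(x,z) = f(x,z)` for `z > -m`, `f_m(x,z) = m^{-p} f(x,-m)|z|^p`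
for `z ≤ -m`, preserves the Ambrosetti–Rabinowitz-type condition: if
`∫_z^0 f(x,τ)dτ ≤ ((1-θ)/(k+1))|z| f(x,z)` for all `z < -m`, then there is `θ' > 0`
depending only on `θ` and `p` with `∫_z^0 f_m(x,τ)dτ ≤ ((1-θ')/(k+1))|z| f_m(x,z)` for all
`z < -m`. -/
theorem stmt11 {α : Type*} (θ p : ℝ) (hθ1 : 0 < θ) (hθ2 : θ < 1) :
    ∃ θ' : ℝ, 0 < θ' ∧ ∀ (k : ℕ), 1 ≤ k → (k : ℝ) < p →
      ∀ (f : α → ℝ → ℝ) (m : ℝ), 0 < m →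
      (∀ x z, 0 < f x z) → (∀ x, Continuous (f x)) →
      (∀ x, ∀ z < -m, (∫ τ in z..0, f x τ) ≤ ((1 - θ) / ((k : ℝ) + 1)) * |z| * f x z) →
      ∀ x, ∀ z < -m,
        (∫ τ in z..0, (if -m < τ then f x τ else m ^ (-p) * f x (-m) * |τ| ^ p))
          ≤ ((1 - θ') / ((k : ℝ) + 1)) * |z|
            * (if -m < z then f x z else m ^ (-p) * f x (-m) * |z| ^ p) := by
  by_cases hp : 1 < p
  swap
  · refine ⟨θ, hθ1, fun k hk hkp => absurd (lt_of_le_of_lt ?_ hkp) hp⟩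
    exact_mod_cast hk
  set c : ℝ := (⌈p⌉ : ℝ) with hcdef
  have hc1 : c < p + 1 := Int.ceil_lt_add_one p
  have hc2 : p ≤ c := Int.le_ceil p
  refine ⟨min θ ((p - c + 1) / (p + 2)), lt_min hθ1 (div_pos (by linarith) (by linarith)), ?_⟩
  set θ' := min θ ((p - c + 1) / (p + 2)) with hθ'def
  have hθ'pos : 0 < θ' := lt_min hθ1 (div_pos (by linarith) (by linarith))
  have hθ'θ : θ' ≤ θ := min_le_left _ _
  intro k hk hkp f m hm hf hfc hAR x z hz
  -- basic positivity
  have hkc : (k : ℝ) + 1 ≤ c := by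
    have h1 : ((k:ℤ) : ℝ) < ((⌈p⌉ : ℤ) : ℝ) := by push_cast; exact lt_of_lt_of_le hkp hc2
    have h2 : (k:ℤ) + 1 ≤ ⌈p⌉ := by exact_mod_cast h1
    rw [hcdef]; exact_mod_cast h2
  have hk1p1 : (k : ℝ) + 1 ≤ (1 - θ') * (p + 1) := by
    have h2 : θ' * (p + 2) ≤ p - c + 1 := by
      have := min_le_right θ ((p - c + 1) / (p + 2))
      rw [le_div_iff₀ (by linarith : (0:ℝ) < p + 2)] at this
      exact this
    nlinarith [hθ'pos.le]
  have hC : 0 < m ^ (-p) * f x (-m) := mul_pos (Real.rpow_pos_of_pos hm _) (hf x _)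
  have hmp : m ^ (-p) * m ^ p = 1 := by
    rw [← Real.rpow_add hm]; simp
  set L : ℝ → ℝ := fun τ => if -m < τ then f x τ else m ^ (-p) * f x (-m) * |τ| ^ p with hLdef
  have hGcont : Continuous fun τ : ℝ => m ^ (-p) * f x (-m) * |τ| ^ p :=
    continuous_const.mul (continuous_abs.rpow_const fun τ => Or.inr (by linarith))
  have hEq1 : EqOn L (fun τ : ℝ => m ^ (-p) * f x (-m) * |τ| ^ p) (uIcc z (-m)) := by
    intro τ hτ
    rw [uIcc_of_le hz.le] at hτ
    simp only [hLdef, if_neg (not_lt.2 hτ.2)]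
  have hEq2 : EqOn L (f x) (uIcc (-m) 0) := by
    intro τ hτ
    rw [uIcc_of_le (by linarith : -m ≤ 0)] at hτ
    rcases eq_or_lt_of_le hτ.1 with h | h
    · simp only [hLdef, ← h, if_neg (lt_irrefl (-m)), abs_neg, abs_of_pos hm]
      calc m ^ (-p) * f x (-m) * m ^ p = m ^ (-p) * m ^ p * f x (-m) := by ring
        _ = f x (-m) := by rw [hmp, one_mul]
    · simp only [hLdef, if_pos h]
  have hi1 : IntervalIntegrable L volume z (-m) :=
    (hGcont.intervalIntegrable z (-m)).congr
      (fun τ hτ =>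
        (hEq1 (uIoc_subset_uIcc hτ)).symm)
  have hi2 : IntervalIntegrable L volume (-m) 0 :=
    ((hfc x).intervalIntegrable (-m) 0).congr
      (fun τ hτ =>
        (hEq2 (uIoc_subset_uIcc hτ)).symm)
  have hsplit : (∫ τ in z..0, L τ) = (∫ τ in z..(-m), L τ) + ∫ τ in (-m)..0, L τ :=
    (integral_add_adjacent_intervals hi1 hi2).symm
  -- first piece
  have hI1 : (∫ τ in z..(-m), L τ)
      = m ^ (-p) * f x (-m) * (((-z) ^ (p + 1) - m ^ (p + 1)) / (p + 1)) := by
    rw [integral_congr hEq1, intervalIntegral.integral_const_mul]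
    congr 1
    have habs : (∫ τ in z..(-m), |τ| ^ p) = ∫ τ in z..(-m), (-τ) ^ p := by
      apply integral_congr
      intro τ hτ
      rw [uIcc_of_le hz.le] at hτ
      show |τ| ^ p = (-τ) ^ p
      rw [abs_of_neg (by linarith [hτ.2] : τ < 0)]
    rw [habs]
    have := intervalIntegral.integral_comp_neg (a := z) (b := -m) (fun u : ℝ => u ^ p)
    rw [this, neg_neg]
    rw [integral_rpow (Or.inl (by linarith : (-1:ℝ) < p))]
  -- second piece
  have hI2 : (∫ τ in (-m)..0, L τ) = ∫ τ in (-m)..0, f x τ := integral_congr hEq2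
  have hI2' : (∫ τ in (-m)..0, f x τ) ≤ (1 - θ) / ((k:ℝ) + 1) * m * f x (-m) := by
    have hFc : Continuous fun w : ℝ => ∫ τ in w..0, f x τ := by
      have h0 : Continuous fun w : ℝ => ∫ τ in (0:ℝ)..w, f x τ :=
        intervalIntegral.continuous_primitive (fun a b => (hfc x).intervalIntegrable a b) 0
      have : (fun w : ℝ => ∫ τ in w..0, f x τ) = fun w => -∫ τ in (0:ℝ)..w, f x τ := by
        funext w; rw [intervalIntegral.integral_symm]
      rw [this]; exact h0.neg
    have hF : Filter.Tendsto (fun w : ℝ => ∫ τ in w..0, f x τ) (nhdsWithin (-m) (Iio (-m)))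
        (nhds (∫ τ in (-m)..0, f x τ)) :=
      (hFc.tendsto (-m)).mono_left nhdsWithin_le_nhds
    have hG : Filter.Tendsto (fun w : ℝ => (1 - θ) / ((k:ℝ) + 1) * |w| * f x w)
        (nhdsWithin (-m) (Iio (-m))) (nhds ((1 - θ) / ((k:ℝ) + 1) * m * f x (-m))) := by
      have hcont : Continuous fun w : ℝ => (1 - θ) / ((k:ℝ) + 1) * |w| * f x w :=
        (continuous_const.mul continuous_abs).mul (hfc x)
      have := (hcont.tendsto (-m)).mono_left
        (nhdsWithin_le_nhds : nhdsWithin (-m) (Iio (-m)) ≤ nhds (-m))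
      simpa [abs_neg, abs_of_pos hm] using this
    exact le_of_tendsto_of_tendsto hF hG
      (Filter.eventually_of_mem self_mem_nhdsWithin fun w hw => hAR x w hw)
  -- assemble
  have hz0 : z < 0 := by linarith
  have hznpos : 0 < -z := by linarith
  rw [if_neg (not_lt.2 hz.le), abs_of_neg hz0, hsplit, hI1, hI2]
  have hfm : f x (-m) = m ^ (-p) * f x (-m) * m ^ p := by
    calc f x (-m) = m ^ (-p) * m ^ p * f x (-m) := by rw [hmp, one_mul]
      _ = m ^ (-p) * f x (-m) * m ^ p := by ring
  have hspow : (-z) * (-z) ^ p = (-z) ^ (p + 1) := by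
    rw [Real.rpow_add hznpos, Real.rpow_one]; ring
  have hmppow : m * m ^ p = m ^ (p + 1) := by
    rw [Real.rpow_add hm, Real.rpow_one]; ring
  have hts : m ^ (p + 1) ≤ (-z) ^ (p + 1) :=
    Real.rpow_le_rpow hm.le (by linarith) (by linarith)
  have ht : (0:ℝ) < m ^ (p + 1) := Real.rpow_pos_of_pos hm _
  have key := aux_alg (θ := θ) (θ' := θ') ht hts
    (by linarith : (0:ℝ) < p + 1) (by positivity : (0:ℝ) < (k:ℝ) + 1) hθ'θ hk1p1
  have hbound : (1 - θ) / ((k:ℝ) + 1) * m * f x (-m)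
      = (1 - θ) / ((k:ℝ) + 1) * (m ^ (-p) * f x (-m) * m ^ (p + 1)) := by
    rw [← hmppow]
    linear_combination (-((1 - θ) / ((k:ℝ) + 1) * m * f x (-m))) * hmp
  rw [hbound] at hI2'
  have hgoal : m ^ (-p) * f x (-m) * (((-z) ^ (p + 1) - m ^ (p + 1)) / (p + 1))
      + (1 - θ) / ((k:ℝ) + 1) * (m ^ (-p) * f x (-m) * m ^ (p + 1))
      ≤ (1 - θ') / ((k:ℝ) + 1) * (m ^ (-p) * f x (-m) * (-z) ^ (p + 1)) := by
    nlinarith [mul_le_mul_of_nonneg_left key hC.le]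
  calc m ^ (-p) * f x (-m) * (((-z) ^ (p + 1) - m ^ (p + 1)) / (p + 1))
        + ∫ τ in (-m)..0, f x τ
      ≤ m ^ (-p) * f x (-m) * (((-z) ^ (p + 1) - m ^ (p + 1)) / (p + 1))
        + (1 - θ) / ((k:ℝ) + 1) * (m ^ (-p) * f x (-m) * m ^ (p + 1)) := by linarith
    _ ≤ (1 - θ') / ((k:ℝ) + 1) * (m ^ (-p) * f x (-m) * (-z) ^ (p + 1)) := hgoal
    _ = (1 - θ') / ((k:ℝ) + 1) * -z * (m ^ (-p) * f x (-m) * (-z) ^ p) := by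
        rw [← hspow]; ring
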